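/- Let 1 < p < q be integers such that log p / log q is irrational. Then the set A = {n ∈ ℕ : S_q(p^n) = 0}, i.e., the set of n for which the base-q expansion of p^n contains at least one digit 0, has asymptotic density equal to 1: (1/N)·#{0 ≤ n < N : the base-q expansion of p^n contains the digit 0} → 1 as N → ∞. -/

import Mathlib

open Filter Finset Real

open scoped Classical in
lemma ap_count (x a ℓ σ : ℝ) (K : ℕ) (hσ : σ ≠ 0) (hl : 0 ≤ ℓ) :
    ((((Finset.range K).filter fun k : ℕ => Int.fract (x + k * σ) ∈ Set.Ico a (a + ℓ)).card : ℝ)) ≤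
      (2 * K * |σ| + 2) * (ℓ / |σ| + 1) := by
  have hσ0 : 0 < |σ| := abs_pos.2 hσ
  set H := (Finset.range K).filter fun k : ℕ => Int.fract (x + k * σ) ∈ Set.Ico a (a + ℓ) with hH
  set g : ℕ → ℤ := fun k => ⌊x + k * σ⌋ with hg
  -- window characterization
  have hwin : ∀ k ∈ H, (g k : ℝ) + a ≤ x + k * σ ∧ x + k * σ < (g k : ℝ) + a + ℓ := by
    intro k hk
    rw [hH, mem_filter] at hk
    obtain ⟨-, h1, h2⟩ := hk
    rw [Int.fract] at h1 h2
    constructor <;> [linarith; linarith]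
  set t := H.image g with ht
  have hcard : H.card = ∑ j ∈ t, (H.filter fun k => g k = j).card :=
    Finset.card_eq_sum_card_fiberwise fun k hk => Finset.mem_image_of_mem g hk
  -- fiber bound
  have hfib : ∀ j ∈ t, ((H.filter fun k => g k = j).card : ℝ) ≤ ℓ / |σ| + 1 := by
    intro j _
    set F := H.filter fun k => g k = j with hF
    rcases F.eq_empty_or_nonempty with he | hne
    · simp [he]; positivity
    · set m := F.min' hne with hm
      have hmF : m ∈ F := F.min'_mem hne
      have hsub : F ⊆ Finset.Icc m (m + ⌊ℓ / |σ|⌋₊) := by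
        intro k hk
        have hmk : m ≤ k := F.min'_le k hk
        have hk' : k ∈ H := (Finset.mem_filter.1 hk).1
        have hm' : m ∈ H := (Finset.mem_filter.1 hmF).1
        have hkj : g k = j := (Finset.mem_filter.1 hk).2
        have hmj : g m = j := (Finset.mem_filter.1 hmF).2
        obtain ⟨hk1, hk2⟩ := hwin k hk'
        obtain ⟨hm1, hm2⟩ := hwin m hm'
        rw [hkj] at hk1 hk2; rw [hmj] at hm1 hm2
        -- |kσ - mσ| < ℓ
        have h1 : ((k : ℝ) - m) * σ < ℓ ∧ -(((k : ℝ) - m) * σ) < ℓ := by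
          constructor <;> nlinarith
        have h2 : ((k : ℝ) - m) * |σ| < ℓ := by
          rcases abs_cases σ with ⟨h, -⟩ | ⟨h, -⟩
          · rw [h]; exact h1.1
          · rw [h]; simpa [neg_mul, mul_neg] using h1.2
        have h3 : ((k - m : ℕ) : ℝ) ≤ ℓ / |σ| := by
          rw [Nat.cast_sub hmk]
          rw [le_div_iff₀ hσ0]
          linarith
        have h4 : k - m ≤ ⌊ℓ / |σ|⌋₊ := Nat.le_floor h3
        exact Finset.mem_Icc.2 ⟨hmk, by omega⟩
      calc ((F.card : ℝ)) ≤ ((Finset.Icc m (m + ⌊ℓ / |σ|⌋₊)).card : ℝ) := by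
            exact_mod_cast Finset.card_le_card hsub
        _ = (⌊ℓ / |σ|⌋₊ + 1 : ℕ) := by rw [Nat.card_Icc]; norm_cast; omega
        _ ≤ ℓ / |σ| + 1 := by
            push_cast
            have := Nat.floor_le (by positivity : (0:ℝ) ≤ ℓ / |σ|)
            linarith
  -- image bound
  have himg : ((t.card : ℝ)) ≤ 2 * K * |σ| + 2 := by
    have hsub : t ⊆ Finset.Icc ⌊x - K * |σ|⌋ ⌊x + K * |σ|⌋ := by
      intro j hj
      obtain ⟨k, hk, rfl⟩ := Finset.mem_image.1 hj
      have hkK : (k : ℝ) ≤ K := by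
        exact_mod_cast (Finset.mem_range.1 (Finset.mem_filter.1 hk).1).le
      have h1 : x - K * |σ| ≤ x + k * σ := by nlinarith [abs_nonneg σ, neg_abs_le σ, le_abs_self σ, Nat.cast_nonneg (α := ℝ) k]
      have h2 : x + k * σ ≤ x + K * |σ| := by nlinarith [le_abs_self σ, neg_abs_le σ, Nat.cast_nonneg (α := ℝ) k]
      exact Finset.mem_Icc.2 ⟨Int.floor_mono h1, Int.floor_mono h2⟩
    calc ((t.card : ℝ)) ≤ ((Finset.Icc ⌊x - K * |σ|⌋ ⌊x + K * |σ|⌋).card : ℝ) := by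
          exact_mod_cast Finset.card_le_card hsub
      _ ≤ 2 * K * |σ| + 2 := by
          rw [Int.card_Icc]
          rcases le_or_gt (⌊x + K * |σ|⌋ + 1 - ⌊x - K * |σ|⌋) 0 with h | h
          · rw [Int.toNat_of_nonpos h]
            have : (0:ℝ) ≤ 2 * K * |σ| + 2 := by positivity
            simpa using this
          · have h3 : (((⌊x + (K:ℝ) * |σ|⌋ + 1 - ⌊x - (K:ℝ) * |σ|⌋).toNat : ℕ) : ℝ)
                = ((⌊x + (K:ℝ) * |σ|⌋ : ℝ) + 1 - (⌊x - (K:ℝ) * |σ|⌋ : ℝ)) := by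
              rw [← Int.cast_natCast, Int.toNat_of_nonneg h.le]; push_cast; ring
            rw [h3]
            have h1 := Int.floor_le (x + K * |σ|)
            have h2 := Int.lt_floor_add_one (x - K * |σ|)
            have h0 : (0:ℝ) ≤ (K:ℝ) * |σ| := by positivity
            linarith
  calc ((H.card : ℝ)) = ∑ j ∈ t, ((H.filter fun k => g k = j).card : ℝ) := by
        rw [hcard]; push_cast; ring
    _ ≤ ∑ j ∈ t, (ℓ / |σ| + 1) := Finset.sum_le_sum hfib
    _ = t.card * (ℓ / |σ| + 1) := by rw [Finset.sum_const]; ring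
    _ ≤ (2 * K * |σ| + 2) * (ℓ / |σ| + 1) := by
        apply mul_le_mul_of_nonneg_right himg
        positivity

open scoped Classical in
lemma rot_count (θ a ℓ : ℝ) (N b : ℕ) (c : ℤ) (hb : 0 < b)
    (hσ : (b : ℝ) * θ - c ≠ 0) (hl : 0 ≤ ℓ) :
    ((((Finset.range N).filter fun n : ℕ => Int.fract (n * θ) ∈ Set.Ico a (a + ℓ)).card : ℝ)) ≤
      (2 * (N + b) * |(b : ℝ) * θ - c| + 2 * b) * (ℓ / |(b : ℝ) * θ - c| + 1) := by
  set σ : ℝ := (b : ℝ) * θ - c with hσdef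
  set K := N / b + 1 with hK
  set P : ℕ → Prop := fun n => Int.fract (n * θ) ∈ Set.Ico a (a + ℓ) with hP
  have key : ∀ r k : ℕ, ((r + k * b : ℕ) : ℝ) * θ = ((r : ℝ) * θ + k * σ) + ((k * c : ℤ) : ℝ) := by
    intro r k
    rw [hσdef]; push_cast; ring
  have hfr : ∀ r k : ℕ, Int.fract (((r + k * b : ℕ) : ℝ) * θ) = Int.fract ((r : ℝ) * θ + k * σ) := by
    intro r k
    rw [key, Int.fract_add_intCast]
  have hsub : (Finset.range N).filter P ⊆
      (Finset.range b).biUnion fun r =>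
        ((Finset.range K).filter fun k : ℕ => Int.fract ((r : ℝ) * θ + k * σ) ∈ Set.Ico a (a + ℓ)).image
          fun k => r + k * b := by
    intro n hn
    rw [Finset.mem_filter, Finset.mem_range] at hn
    obtain ⟨hnN, hPn⟩ := hn
    refine Finset.mem_biUnion.2 ⟨n % b, Finset.mem_range.2 (Nat.mod_lt _ hb), ?_⟩
    refine Finset.mem_image.2 ⟨n / b, ?_, Nat.mod_add_div' n b⟩
    refine Finset.mem_filter.2 ⟨Finset.mem_range.2 ?_, ?_⟩
    · have : n / b ≤ N / b := Nat.div_le_div_right hnN.le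
      omega
    · rw [← hfr]
      rw [Nat.mod_add_div']
      exact hPn
  have h1 : (((Finset.range N).filter P).card : ℝ) ≤
      ∑ r ∈ Finset.range b,
        ((((Finset.range K).filter fun k : ℕ =>
          Int.fract ((r : ℝ) * θ + k * σ) ∈ Set.Ico a (a + ℓ)).card : ℝ)) := by
    have := (Finset.card_le_card hsub).trans (Finset.card_biUnion_le)
    have h2 := this.trans (Finset.sum_le_sum fun r _ => Finset.card_image_le)
    exact_mod_cast h2
  have h3 : ∀ r ∈ Finset.range b,
      ((((Finset.range K).filter fun k : ℕ =>
        Int.fract ((r : ℝ) * θ + k * σ) ∈ Set.Ico a (a + ℓ)).card : ℝ)) ≤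
        (2 * K * |σ| + 2) * (ℓ / |σ| + 1) := fun r _ => ap_count ((r : ℝ) * θ) a ℓ σ K hσ hl
  have h4 : (((Finset.range N).filter P).card : ℝ) ≤ b * ((2 * K * |σ| + 2) * (ℓ / |σ| + 1)) := by
    calc (((Finset.range N).filter P).card : ℝ) ≤ _ := h1
      _ ≤ ∑ _r ∈ Finset.range b, (2 * K * |σ| + 2) * (ℓ / |σ| + 1) := Finset.sum_le_sum h3
      _ = b * ((2 * K * |σ| + 2) * (ℓ / |σ| + 1)) := by
          rw [Finset.sum_const, Finset.card_range]; ring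
  refine h4.trans ?_
  have hbK : (b : ℝ) * K ≤ N + b := by
    have : b * K ≤ N + b := by
      have := Nat.div_mul_le_self N b
      calc b * K = N / b * b + b := by rw [hK]; ring
        _ ≤ N + b := by omega
    exact_mod_cast this
  have hpos : (0:ℝ) ≤ ℓ / |σ| + 1 := by positivity
  have : (b : ℝ) * ((2 * K * |σ| + 2) * (ℓ / |σ| + 1)) =
      (2 * ((b:ℝ) * K) * |σ| + 2 * b) * (ℓ / |σ| + 1) := by ring
  rw [this]
  apply mul_le_mul_of_nonneg_right _ hpos
  have := abs_nonneg σ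
  nlinarith

lemma zero_mem_digits_of_div (q : ℕ) (hq : 1 < q) (j : ℕ) :
    ∀ m : ℕ, 0 ∈ Nat.digits q (m / q ^ j) → 0 ∈ Nat.digits q m := by
  induction j with
  | zero => intro m h; simpa using h
  | succ j ih =>
    intro m h
    have hdd : m / q ^ (j + 1) = (m / q) / q ^ j := by
      rw [Nat.div_div_eq_div_mul, pow_succ']
    rw [hdd] at h
    have h2 : 0 ∈ Nat.digits q (m / q) := ih (m / q) h
    have hm : 0 < m := by
      rcases Nat.eq_zero_or_pos m with rfl | hm
      · simp at h2
      · exact hm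
    have hmq : 0 < m / q := by
      rcases Nat.eq_zero_or_pos (m / q) with h0 | h0
      · rw [h0] at h2; simp at h2
      · exact h0
    rw [Nat.digits_def' hq hm]
    exact List.mem_cons_of_mem _ h2

lemma count_no_zero_digit (q : ℕ) (hq : 1 < q) :
    ∀ k : ℕ, ((Finset.range (q ^ k)).filter fun D => 0 ∉ Nat.digits q D).card ≤
      (k + 1) * (q - 1) ^ k := by
  intro k
  induction k with
  | zero => exact (Finset.card_filter_le _ _).trans (by simp)
  | succ k ih =>
    set H := (Finset.range (q ^ (k + 1))).filter fun D => 0 ∉ Nat.digits q D with hH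
    have hsplit : H.card ≤ 1 + (H.erase 0).card := by
      rcases em (0 ∈ H) with h0 | h0
      · have h := Finset.card_erase_add_one h0; omega
      · have h : H.erase 0 = H := Finset.erase_eq_of_notMem h0
        rw [h]; omega
    have hinj : (H.erase 0).card ≤
        (((Finset.range (q ^ k)).filter fun D => 0 ∉ Nat.digits q D) ×ˢ Finset.Ico 1 q).card := by
      apply Finset.card_le_card_of_injOn (fun D => (D / q, D % q))
      · intro D hD
        rw [Finset.mem_coe, Finset.mem_erase, hH, Finset.mem_filter, Finset.mem_range] at hD
        obtain ⟨hD0, hDlt, hDdig⟩ := hD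
        have hDpos : 0 < D := Nat.pos_of_ne_zero hD0
        have hdig : Nat.digits q D = D % q :: Nat.digits q (D / q) := Nat.digits_def' hq hDpos
        rw [hdig] at hDdig
        simp only [List.mem_cons, not_or] at hDdig
        rw [Finset.mem_coe]
        refine Finset.mem_product.2 ⟨Finset.mem_filter.2 ⟨Finset.mem_range.2 ?_, hDdig.2⟩,
          Finset.mem_Ico.2 ⟨?_, Nat.mod_lt _ (by omega)⟩⟩
        · rw [Nat.div_lt_iff_lt_mul (by omega : 0 < q), ← pow_succ]
          exact hDlt
        · dsimp only; omega
      · intro a _ b _ hab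
        have h1 : a / q = b / q := congrArg Prod.fst hab
        have h2 : a % q = b % q := congrArg Prod.snd hab
        have h3 : q * (a / q) = q * (b / q) := by rw [h1]
        have h4 := Nat.div_add_mod a q
        have h5 := Nat.div_add_mod b q
        omega
    have hprod : (((Finset.range (q ^ k)).filter fun D => 0 ∉ Nat.digits q D) ×ˢ
        Finset.Ico 1 q).card ≤ ((k + 1) * (q - 1) ^ k) * (q - 1) := by
      rw [Finset.card_product, Nat.card_Ico]
      exact Nat.mul_le_mul_right _ ih
    have hfin : 1 + ((k + 1) * (q - 1) ^ k) * (q - 1) ≤ (k + 1 + 1) * (q - 1) ^ (k + 1) := by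
      have h1 : 1 ≤ (q - 1) ^ (k + 1) := Nat.one_le_pow _ _ (by omega)
      calc 1 + ((k + 1) * (q - 1) ^ k) * (q - 1) = 1 + (k + 1) * (q - 1) ^ (k + 1) := by
            rw [pow_succ]; ring_nf
        _ ≤ (k + 1 + 1) * (q - 1) ^ (k + 1) := by nlinarith
    omega

lemma exists_small_rot (θ : ℝ) (hθ : Irrational θ) (η : ℝ) (hη : 0 < η) (hη1 : η ≤ 1) :
    ∃ (b : ℕ) (c : ℤ), 0 < b ∧ (b : ℝ) * θ - c ≠ 0 ∧ |(b : ℝ) * θ - c| < η := by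
  have hrat : ∀ (b : ℕ) (c : ℤ), 0 < b → (b : ℝ) * θ - c ≠ 0 := by
    intro b c hb h
    have : θ = (c : ℝ) / (b : ℤ) := by
      have hb0 : (b : ℝ) ≠ 0 := by positivity
      field_simp
      push_cast
      linarith [sub_eq_zero.1 h]
    exact (irrational_iff_ne_rational θ).1 hθ c b (by exact_mod_cast hb.ne') (by exact_mod_cast this)
  set S : AddSubgroup ℝ := AddSubgroup.closure {1, θ} with hS
  rcases S.dense_or_cyclic with hdense | ⟨u, hu⟩
  · obtain ⟨g, hgS, hg0, hgη⟩ := hdense.exists_between hη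
    obtain ⟨m, n, hmn⟩ := (AddSubgroup.mem_closure_pair).1 hgS
    rw [zsmul_eq_mul, zsmul_eq_mul, mul_one] at hmn
    have hn : n ≠ 0 := by
      rintro rfl
      rw [Int.cast_zero, zero_mul, add_zero] at hmn
      subst hmn
      have h1 : 0 < m := by exact_mod_cast hg0
      have h2 : (1 : ℝ) ≤ m := by exact_mod_cast h1
      linarith
    rcases hn.lt_or_gt with hneg | hpos
    · set b := (-n).toNat with hb
      have hbz : ((b : ℕ) : ℤ) = -n := Int.toNat_of_nonneg (by omega)
      have hbr : ((b : ℕ) : ℝ) = -(n : ℝ) := by exact_mod_cast hbz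
      refine ⟨b, m, by omega, hrat _ _ (by omega), ?_⟩
      have : (b : ℝ) * θ - m = -g := by rw [hbr]; linarith
      rw [this, abs_neg, abs_of_pos hg0]
      exact hgη
    · set b := n.toNat with hb
      have hbz : ((b : ℕ) : ℤ) = n := Int.toNat_of_nonneg (by omega)
      have hbr : ((b : ℕ) : ℝ) = (n : ℝ) := by exact_mod_cast hbz
      refine ⟨b, -m, by omega, hrat _ _ (by omega), ?_⟩
      have : (b : ℝ) * θ - (-m : ℤ) = g := by rw [hbr]; push_cast; linarith
      rw [this, abs_of_pos hg0]
      exact hgη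
  · exfalso
    have h1 : (1 : ℝ) ∈ S := AddSubgroup.subset_closure (by simp)
    have h2 : θ ∈ S := AddSubgroup.subset_closure (by simp)
    rw [hu, AddSubgroup.mem_closure_singleton] at h1 h2
    obtain ⟨m, hm⟩ := h1
    obtain ⟨n, hn⟩ := h2
    rw [zsmul_eq_mul] at hm hn
    have hm0 : m ≠ 0 := by rintro rfl; norm_num at hm
    have hmr : (m : ℝ) ≠ 0 := by exact_mod_cast hm0
    have key : θ * m = n := by
      calc θ * m = (n * u) * m := by rw [hn]
        _ = n * (m * u) := by ring
        _ = n := by rw [hm, mul_one]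
    have : θ = (n : ℝ) / (m : ℝ) := by field_simp; linarith [key]
    exact (irrational_iff_ne_rational θ).1 hθ n m hm0 this

lemma digit_window (p q k n : ℕ) (hp : 1 < p) (hq : 1 < q) (hk : 0 < k)
    (hn : q ^ k ≤ p ^ n) (hdig : 0 ∉ Nat.digits q (p ^ n)) :
    ∃ D : ℕ, D ∈ Finset.Ico (q ^ (k - 1)) (q ^ k) ∧ 0 ∉ Nat.digits q D ∧
      Int.fract ((n : ℝ) * (Real.log p / Real.log q)) ∈
        Set.Ico (Real.logb q D - (k - 1 : ℕ)) (Real.logb q (D + 1) - (k - 1 : ℕ)) := by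
  have hq0 : (0:ℝ) < q := by positivity
  have hq1 : (1:ℝ) < q := by exact_mod_cast hq
  have hpn0 : 0 < p ^ n := pow_pos (by omega) n
  set L := Nat.log q (p ^ n) with hL
  have hkL : k ≤ L := ((Nat.le_log_iff_pow_le hq hpn0.ne').2 hn)
  set j := L + 1 - k with hj
  set D := p ^ n / q ^ j with hD
  have hqj : 0 < q ^ j := pow_pos (by omega) j
  -- D bounds
  have hDlb : q ^ (k - 1) ≤ D := by
    rw [hD, Nat.le_div_iff_mul_le hqj, ← pow_add]
    have : k - 1 + j = L := by omega
    rw [this]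
    exact Nat.pow_log_le_self q hpn0.ne'
  have hDub : D < q ^ k := by
    rw [hD, Nat.div_lt_iff_lt_mul hqj, ← pow_add]
    have : k + j = L + 1 := by omega
    rw [this]
    exact Nat.lt_pow_succ_log_self hq _
  have hD0 : 0 < D := lt_of_lt_of_le (pow_pos (by omega) _) hDlb
  refine ⟨D, Finset.mem_Ico.2 ⟨hDlb, hDub⟩, fun h => hdig (zero_mem_digits_of_div q hq j _ h), ?_⟩
  -- real analysis
  have hnθ : (n : ℝ) * (Real.log p / Real.log q) = Real.logb q ((p : ℝ) ^ n) := by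
    rw [Real.logb, Real.log_pow]; ring
  have hfloor : ⌊(n : ℝ) * (Real.log p / Real.log q)⌋ = (L : ℤ) := by
    rw [hnθ]
    have : ((p : ℝ) ^ n) = ((p ^ n : ℕ) : ℝ) := by push_cast; ring
    rw [this, Real.floor_logb_natCast (by positivity), Int.log_natCast]
  have hfract : Int.fract ((n : ℝ) * (Real.log p / Real.log q)) =
      Real.logb q ((p : ℝ) ^ n) - L := by
    rw [Int.fract, hfloor, hnθ]; norm_num
  -- inequalities D * q^j ≤ p^n < (D+1) * q^j
  have hlow : (D : ℝ) * (q : ℝ) ^ j ≤ (p : ℝ) ^ n := by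
    have : D * q ^ j ≤ p ^ n := Nat.div_mul_le_self _ _
    exact_mod_cast this
  have hhigh : (p : ℝ) ^ n < ((D : ℝ) + 1) * (q : ℝ) ^ j := by
    have : p ^ n < (D + 1) * q ^ j := by
      have h1 := Nat.div_add_mod (p ^ n) (q ^ j)
      have h2 : p ^ n % q ^ j < q ^ j := Nat.mod_lt _ hqj
      have h3 : (D + 1) * q ^ j = q ^ j * (p ^ n / q ^ j) + q ^ j := by rw [hD]; ring
      omega
    exact_mod_cast this
  have hlogD : Real.logb q ((D : ℝ) * (q : ℝ) ^ j) = Real.logb q D + j := by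
    rw [Real.logb_mul (by positivity) (by positivity)]
    rw [show ((q:ℝ) ^ j) = ((q:ℝ) ^ (j:ℕ)) from rfl, Real.logb_pow,
      Real.logb_self_eq_one hq1]
    ring
  have hlogD1 : Real.logb q (((D : ℝ) + 1) * (q : ℝ) ^ j) = Real.logb q ((D : ℝ) + 1) + j := by
    rw [Real.logb_mul (by positivity) (by positivity)]
    rw [show ((q:ℝ) ^ j) = ((q:ℝ) ^ (j:ℕ)) from rfl, Real.logb_pow,
      Real.logb_self_eq_one hq1]
    ring
  have h1 : Real.logb q D + j ≤ Real.logb q ((p : ℝ) ^ n) := by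
    rw [← hlogD]
    exact Real.logb_le_logb_of_le hq1 (by positivity) hlow
  have h2 : Real.logb q ((p : ℝ) ^ n) < Real.logb q ((D : ℝ) + 1) + j := by
    rw [← hlogD1]
    exact Real.logb_lt_logb hq1 (by positivity) hhigh
  have hjr : (j : ℝ) = (L : ℝ) + 1 - k := by
    rw [hj]; push_cast [Nat.cast_sub (by omega : k ≤ L + 1)]; ring
  have hkr : ((k - 1 : ℕ) : ℝ) = (k : ℝ) - 1 := by
    push_cast [Nat.cast_sub (by omega : 1 ≤ k)]; ring
  constructor
  · rw [hfract, hkr]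
    linarith [h1, hjr]
  · rw [hfract, hkr]
    linarith [h2, hjr]

lemma exists_good_k (q : ℕ) (hq : 1 < q) (ε : ℝ) (hε : 0 < ε) :
    ∃ m : ℕ, ((((m + 2) * (q - 1) ^ (m + 1) : ℕ)) : ℝ) / ((q : ℝ) ^ m * Real.log q) < ε := by
  have hq1 : (1 : ℝ) < q := by exact_mod_cast hq
  have hq0 : (0 : ℝ) < q := by linarith
  have hlogq : 0 < Real.log q := Real.log_pos hq1
  set r : ℝ := ((q : ℝ) - 1) / q with hr
  have hr0 : 0 ≤ r := by rw [hr]; apply div_nonneg <;> linarith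
  have hr1 : r < 1 := by rw [hr, div_lt_one hq0]; linarith
  have h1 : Tendsto (fun n : ℕ => (n : ℝ) * r ^ n) atTop (nhds 0) :=
    tendsto_self_mul_const_pow_of_lt_one hr0 hr1
  have h2 : Tendsto (fun m : ℕ => ((m + 2 : ℕ) : ℝ) * r ^ (m + 2)) atTop (nhds 0) :=
    h1.comp (tendsto_add_atTop_nat 2)
  have h3 : Tendsto (fun m : ℕ => ((m + 2 : ℕ) : ℝ) * r ^ (m + 2) *
      ((q : ℝ) ^ 2 / (((q : ℝ) - 1) * Real.log q))) atTop (nhds 0) := by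
    simpa using h2.mul_const ((q : ℝ) ^ 2 / (((q : ℝ) - 1) * Real.log q))
  have heq : ∀ m : ℕ, ((m + 2 : ℕ) : ℝ) * r ^ (m + 2) *
      ((q : ℝ) ^ 2 / (((q : ℝ) - 1) * Real.log q)) =
      ((((m + 2) * (q - 1) ^ (m + 1) : ℕ)) : ℝ) / ((q : ℝ) ^ m * Real.log q) := by
    intro m
    have hcast : ((((m + 2) * (q - 1) ^ (m + 1) : ℕ)) : ℝ) =
        ((m : ℝ) + 2) * ((q : ℝ) - 1) ^ (m + 1) := by
      push_cast [Nat.cast_sub hq.le]; ring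
    rw [hcast, hr, div_pow]
    have e1 : ((q : ℝ) - 1) ^ (m + 2) = ((q : ℝ) - 1) ^ (m + 1) * ((q : ℝ) - 1) := pow_succ _ _
    have e2 : (q : ℝ) ^ (m + 2) = (q : ℝ) ^ m * q * q := by rw [pow_succ, pow_succ]
    rw [e1, e2]
    have hq1' : ((q : ℝ) - 1) ≠ 0 := by linarith
    push_cast
    field_simp
  have h4 : Tendsto (fun m : ℕ => ((((m + 2) * (q - 1) ^ (m + 1) : ℕ)) : ℝ) /
      ((q : ℝ) ^ m * Real.log q)) atTop (nhds 0) := h3.congr heq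
  exact (h4.eventually_lt_const hε).exists

/-- If `1 < p < q` and `log p / log q` is irrational, then the set of `n` such
that the base-`q` expansion of `p^n` contains at least one digit `0` (i.e.
`S_q(p^n) = 0`) has asymptotic density `1`. -/
theorem density_zero_digit_pow (p q : ℕ) (hp : 1 < p) (hpq : p < q)
    (hirr : Irrational (Real.log p / Real.log q)) :
    Tendsto (fun N : ℕ =>
        (((Finset.range N).filter fun n => 0 ∈ Nat.digits q (p ^ n)).card : ℝ) / N)
      atTop (nhds 1) := by
  have hq : 1 < q := hp.trans hpq
  set θ : ℝ := Real.log p / Real.log q with hθdef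
  have hmain : Tendsto (fun N : ℕ =>
      (((Finset.range N).filter fun n => 0 ∉ Nat.digits q (p ^ n)).card : ℝ) / N)
      atTop (nhds 0) := by
    rw [NormedAddCommGroup.tendsto_nhds_zero]
    intro ε hε
    have hq1 : (1 : ℝ) < q := by exact_mod_cast hq
    have hlogq : 0 < Real.log q := Real.log_pos hq1
    obtain ⟨m, hm⟩ := exists_good_k q hq (ε / 8) (by positivity)
    set k := m + 1 with hk
    have hk0 : 0 < k := Nat.succ_pos m
    set M : ℕ := (k + 1) * (q - 1) ^ k with hMdef
    have hM1 : 1 ≤ M := by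
      have h1 : 1 ≤ (q - 1) ^ k := Nat.one_le_pow _ _ (by omega)
      calc 1 = 1 * 1 := rfl
        _ ≤ (k + 1) * (q - 1) ^ k := Nat.mul_le_mul (by omega) h1
    set η : ℝ := 1 / ((q : ℝ) ^ m * Real.log q) with hηdef
    have hη0 : 0 < η := by rw [hηdef]; positivity
    have hMη : (M : ℝ) * η < ε / 8 := by
      have e : (M : ℝ) * η =
          (((m + 2) * (q - 1) ^ (m + 1) : ℕ) : ℝ) / ((q : ℝ) ^ m * Real.log q) := by
        rw [hηdef, hMdef, hk]; push_cast; ring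
      rw [e]; exact hm
    obtain ⟨b, c, hb0, hσne, hσlt⟩ := exists_small_rot θ hirr (min (ε / (8 * ((M : ℝ) + 1))) 1)
      (lt_min (by positivity) one_pos) (min_le_right _ _)
    set σ : ℝ := (b : ℝ) * θ - c with hσdef
    set δ : ℝ := |σ| with hδdef
    have hδ0 : 0 < δ := abs_pos.2 hσne
    have hMδ : (M : ℝ) * δ ≤ ε / 8 := by
      have h1 : δ ≤ ε / (8 * ((M : ℝ) + 1)) := (hσlt.trans_le (min_le_left _ _)).le
      have hM1' : (0 : ℝ) < (M : ℝ) + 1 := by positivity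
      have h2 : (M : ℝ) * δ ≤ ((M : ℝ) + 1) * (ε / (8 * ((M : ℝ) + 1))) :=
        mul_le_mul (by linarith) h1 hδ0.le (by linarith)
      have h3 : ((M : ℝ) + 1) * (ε / (8 * ((M : ℝ) + 1))) = ε / 8 := by field_simp
      linarith
    set n₀ : ℕ := q ^ k with hn₀def
    have hpow : ∀ n : ℕ, n₀ ≤ n → q ^ k ≤ p ^ n := by
      intro n hn
      have h1 : n < 2 ^ n := Nat.lt_two_pow_self
      have h2 : 2 ^ n ≤ p ^ n := Nat.pow_le_pow_left hp n
      omega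
    set S := (Finset.Ico (q ^ (k - 1)) (q ^ k)).filter (fun D => 0 ∉ Nat.digits q D) with hSdef
    have hScard : S.card ≤ M := by
      refine le_trans (Finset.card_le_card ?_) (count_no_zero_digit q hq k)
      refine Finset.filter_subset_filter _ ?_
      intro x hx
      rw [Finset.mem_range]
      exact (Finset.mem_Ico.1 hx).2
    have hDlen : ∀ D ∈ S, 0 ≤ Real.logb q ((D : ℝ) + 1) - Real.logb q D ∧
        Real.logb q ((D : ℝ) + 1) - Real.logb q D ≤ η := by
      intro D hD
      obtain ⟨hD1, hD2⟩ := Finset.mem_Ico.1 (Finset.mem_filter.1 hD).1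
      have hDpos : 0 < D := lt_of_lt_of_le (Nat.pow_pos (by omega)) hD1
      have hDr : (1 : ℝ) ≤ (D : ℝ) := by exact_mod_cast hDpos
      constructor
      · have := Real.logb_le_logb_of_le hq1 (by positivity : (0 : ℝ) < (D : ℝ))
          (by linarith : (D : ℝ) ≤ (D : ℝ) + 1)
        linarith
      · have hqm : ((q : ℝ)) ^ m ≤ (D : ℝ) := by
          have h0 : q ^ m ≤ D := by
            have : k - 1 = m := by omega
            rwa [this] at hD1
          exact_mod_cast h0
        have h1 : Real.logb q ((D : ℝ) + 1) - Real.logb q D =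
            Real.log (((D : ℝ) + 1) / D) / Real.log q := by
          rw [Real.logb, Real.logb, ← sub_div,
            ← Real.log_div (by positivity) (by positivity)]
        have h2 : Real.log (((D : ℝ) + 1) / D) ≤ 1 / (D : ℝ) := by
          have h3 := Real.log_le_sub_one_of_pos
            (show (0 : ℝ) < ((D : ℝ) + 1) / D by positivity)
          have h4 : ((D : ℝ) + 1) / D - 1 = 1 / D := by field_simp; ring
          linarith
        have h5 : (1 : ℝ) / (D : ℝ) ≤ 1 / ((q : ℝ) ^ m) :=
          one_div_le_one_div_of_le (by positivity) hqm
        rw [h1, hηdef]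
        calc Real.log (((D : ℝ) + 1) / D) / Real.log q ≤ (1 / ((q : ℝ) ^ m)) / Real.log q := by
              gcongr
              linarith
          _ = 1 / ((q : ℝ) ^ m * Real.log q) := by rw [div_div]
    -- per-N bound
    have hcount : ∀ N : ℕ,
        ((((Finset.range N).filter fun n => 0 ∉ Nat.digits q (p ^ n)).card : ℝ)) ≤
          (n₀ : ℝ) + (M : ℝ) * ((2 * ((N : ℝ) + b) * δ + 2 * b) * (η / δ + 1)) := by
      intro N
      have hsub : (Finset.range N).filter (fun n => 0 ∉ Nat.digits q (p ^ n)) ⊆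
          Finset.range n₀ ∪ S.biUnion (fun D => (Finset.range N).filter fun n : ℕ =>
            Int.fract ((n : ℝ) * θ) ∈ Set.Ico (Real.logb q D - ((k - 1 : ℕ) : ℝ))
              ((Real.logb q D - ((k - 1 : ℕ) : ℝ)) +
                (Real.logb q ((D : ℝ) + 1) - Real.logb q D))) := by
        intro n hn
        rw [Finset.mem_filter, Finset.mem_range] at hn
        obtain ⟨hnN, hnd⟩ := hn
        rcases lt_or_ge n n₀ with h | h
        · exact Finset.mem_union_left _ (Finset.mem_range.2 h)
        · refine Finset.mem_union_right _ ?_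
          obtain ⟨D, hDmem, hDdig, hDfr⟩ := digit_window p q k n hp hq hk0 (hpow n h) hnd
          refine Finset.mem_biUnion.2 ⟨D, Finset.mem_filter.2 ⟨hDmem, hDdig⟩, ?_⟩
          refine Finset.mem_filter.2 ⟨Finset.mem_range.2 hnN, ?_⟩
          have he : (Real.logb q D - ((k - 1 : ℕ) : ℝ)) +
              (Real.logb q ((D : ℝ) + 1) - Real.logb q D)
              = Real.logb q ((D : ℝ) + 1) - ((k - 1 : ℕ) : ℝ) := by ring
          rw [he]
          exact hDfr
      have hc1 : (((Finset.range N).filter fun n => 0 ∉ Nat.digits q (p ^ n)).card : ℝ) ≤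
          (n₀ : ℝ) + ∑ D ∈ S, (((Finset.range N).filter fun n : ℕ =>
            Int.fract ((n : ℝ) * θ) ∈ Set.Ico (Real.logb q D - ((k - 1 : ℕ) : ℝ))
              ((Real.logb q D - ((k - 1 : ℕ) : ℝ)) +
                (Real.logb q ((D : ℝ) + 1) - Real.logb q D))).card : ℝ) := by
        have hnat := (Finset.card_le_card hsub).trans
          ((Finset.card_union_le _ _).trans (Nat.add_le_add (le_of_eq (Finset.card_range n₀))
            Finset.card_biUnion_le))
        exact_mod_cast hnat
      refine hc1.trans ?_
      have hterm : ∀ D ∈ S, (((Finset.range N).filter fun n : ℕ =>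
            Int.fract ((n : ℝ) * θ) ∈ Set.Ico (Real.logb q D - ((k - 1 : ℕ) : ℝ))
              ((Real.logb q D - ((k - 1 : ℕ) : ℝ)) +
                (Real.logb q ((D : ℝ) + 1) - Real.logb q D))).card : ℝ) ≤
          (2 * ((N : ℝ) + b) * δ + 2 * b) * (η / δ + 1) := by
        intro D hD
        obtain ⟨hl0, hlη⟩ := hDlen D hD
        have h1 := rot_count θ (Real.logb q D - ((k - 1 : ℕ) : ℝ))
          (Real.logb q ((D : ℝ) + 1) - Real.logb q D) N b c hb0 hσne hl0
        refine h1.trans ?_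
        have hf1 : (0 : ℝ) ≤ 2 * ((N : ℝ) + b) * δ + 2 * b := by positivity
        gcongr
      calc (n₀ : ℝ) + ∑ D ∈ S, _ ≤
          (n₀ : ℝ) + ∑ _D ∈ S, (2 * ((N : ℝ) + b) * δ + 2 * b) * (η / δ + 1) := by
            exact add_le_add_right (Finset.sum_le_sum hterm) _
        _ = (n₀ : ℝ) + (S.card : ℝ) * ((2 * ((N : ℝ) + b) * δ + 2 * b) * (η / δ + 1)) := by
            rw [Finset.sum_const]; push_cast; ring
        _ ≤ (n₀ : ℝ) + (M : ℝ) * ((2 * ((N : ℝ) + b) * δ + 2 * b) * (η / δ + 1)) := by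
            have hMr : (S.card : ℝ) ≤ (M : ℝ) := by exact_mod_cast hScard
            have : (0 : ℝ) ≤ (2 * ((N : ℝ) + b) * δ + 2 * b) * (η / δ + 1) := by positivity
            nlinarith
    -- conclude
    set CC : ℝ := (n₀ : ℝ) + (b : ℝ) * (ε / 2) + 2 * b * M * (η / δ) + 2 * b * M with hCC
    have hkey : ∀ N : ℕ,
        ((((Finset.range N).filter fun n => 0 ∉ Nat.digits q (p ^ n)).card : ℝ)) ≤
          (N : ℝ) * (ε / 2) + CC := by
      intro N
      have h0 := hcount N
      have hexp : (M : ℝ) * ((2 * ((N : ℝ) + b) * δ + 2 * b) * (η / δ + 1)) =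
          2 * ((N : ℝ) + b) * ((M : ℝ) * η) + 2 * ((N : ℝ) + b) * ((M : ℝ) * δ) +
            2 * b * M * (η / δ) + 2 * b * M := by
        field_simp
        ring
      have hA : (0 : ℝ) ≤ (N : ℝ) + b := by positivity
      have t1 : 2 * ((N : ℝ) + b) * ((M : ℝ) * η) ≤ 2 * ((N : ℝ) + b) * (ε / 8) := by
        apply mul_le_mul_of_nonneg_left hMη.le (by positivity)
      have t2 : 2 * ((N : ℝ) + b) * ((M : ℝ) * δ) ≤ 2 * ((N : ℝ) + b) * (ε / 8) := by
        apply mul_le_mul_of_nonneg_left hMδ (by positivity)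
      rw [hexp] at h0
      rw [hCC]
      linarith
    have hev := (tendsto_const_div_atTop_nhds_zero_nat CC).eventually_lt_const
      (show (0 : ℝ) < ε / 2 by positivity)
    filter_upwards [hev, eventually_ge_atTop 1] with N h1 h2
    have hN0 : (0 : ℝ) < N := by exact_mod_cast Nat.lt_of_lt_of_le Nat.zero_lt_one h2
    rw [Real.norm_eq_abs, abs_of_nonneg (div_nonneg (Nat.cast_nonneg _) (Nat.cast_nonneg _))]
    have h3 := hkey N
    calc (((Finset.range N).filter fun n => 0 ∉ Nat.digits q (p ^ n)).card : ℝ) / N ≤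
        ((N : ℝ) * (ε / 2) + CC) / N := by gcongr
      _ = ε / 2 + CC / N := by field_simp
      _ < ε := by linarith
  have h1 : Tendsto (fun N : ℕ =>
      1 - (((Finset.range N).filter fun n => 0 ∉ Nat.digits q (p ^ n)).card : ℝ) / N)
      atTop (nhds 1) := by
    simpa using tendsto_const_nhds.sub hmain
  apply h1.congr'
  filter_upwards [eventually_ge_atTop 1] with N hN
  have hN0 : (0 : ℝ) < N := by exact_mod_cast Nat.lt_of_lt_of_le Nat.zero_lt_one hN
  have hcard := Finset.card_filter_add_card_filter_not
    (s := Finset.range N) (p := fun n => 0 ∈ Nat.digits q (p ^ n))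
  rw [Finset.card_range] at hcard
  have hcast : ((((Finset.range N).filter fun n => 0 ∈ Nat.digits q (p ^ n)).card : ℝ)) +
      (((Finset.range N).filter fun n => 0 ∉ Nat.digits q (p ^ n)).card : ℝ) = (N : ℝ) := by
    exact_mod_cast hcard
  field_simp
  linarith
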